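/- Let q : ℝ → ℝ be twice differentiable and satisfy the Painlevé-II equation q″(t) = 2q(t)³ + t·q(t) for all t. Then the function r̃(t) = −q(t)²/2 satisfies 2 r̃ r̃″ − (r̃′)² + 16 r̃³ − 4 t r̃² = 0 for all t. -/

import Mathlib

/-- If `q` satisfies the Painlevé-II equation `q″ = 2q³ + tq` (with `α = 0`), then
`r̃ = −q²/2` satisfies equation (3.34): `2r̃r̃″ − (r̃′)² + 16r̃³ − 4tr̃² = 0`. -/
theorem painleveII_to_softedge_ode (q : ℝ → ℝ)
    (hq : Differentiable ℝ q) (hq' : Differentiable ℝ (deriv q))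
    (hode : ∀ t : ℝ, deriv (deriv q) t = 2 * (q t) ^ 3 + t * q t) :
    ∀ t : ℝ,
      2 * (-(q t) ^ 2 / 2) * deriv (deriv (fun x => -(q x) ^ 2 / 2)) t
        - (deriv (fun x => -(q x) ^ 2 / 2) t) ^ 2
        + 16 * (-(q t) ^ 2 / 2) ^ 3
        - 4 * t * (-(q t) ^ 2 / 2) ^ 2 = 0 := by
  intro t
  have h1 : deriv (fun x => -(q x) ^ 2 / 2) = fun x => -(q x * deriv q x) := by
    funext x
    have : HasDerivAt (fun x => -(q x) ^ 2 / 2) (-(q x * deriv q x)) x := by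
      have : HasDerivAt (fun x => -(q x) ^ 2 / 2) (-(↑(2:ℕ) * q x ^ (2 - 1) * deriv q x) / 2) x :=
        ((hq x).hasDerivAt.pow 2).neg.div_const 2
      convert this using 1
      ring
    exact this.deriv
  have h2 : deriv (deriv (fun x => -(q x) ^ 2 / 2)) t
      = -(deriv q t * deriv q t + q t * deriv (deriv q) t) := by
    rw [h1]
    have : HasDerivAt (fun x => -(q x * deriv q x))
        (-(deriv q t * deriv q t + q t * deriv (deriv q) t)) t :=
      ((hq t).hasDerivAt.mul (hq' t).hasDerivAt).neg
    exact this.deriv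
  rw [h2, h1, hode t]
  ring
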